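/- Let (x_n) be a normalized sequence in a Banach space X satisfying: for all x ∈ X and all reals β₁, β₂ with |β₁| + |β₂| ≠ 0, lim_m lim_n ‖x + β₁ x_m + β₂ x_n‖ = lim_m ( ‖(|β₁|/(|β₁|+|β₂|))•x + β₁ x_m‖ + ‖(|β₂|/(|β₁|+|β₂|))•x + β₂ x_m‖ ). Then for any ε_i ↓ 0 in (0,1) there is a subsequence (x_{n_i}) with ‖∑_{i=i₀}^k α_i x_{n_i}‖ ≥ (1 − ε_{i₀}) ∑_{i=i₀}^k |α_i| for all 1 ≤ i₀ ≤ k and all real scalars; in particular (x_{n_i}) is equivalent to the unit vector basis of ℓ₁. -/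

import Mathlib

open Filter

private lemma prod_one_sub_ge (θ : ℕ → ℝ) (S : Finset ℕ)
    (h0 : ∀ j ∈ S, 0 ≤ θ j) (h1 : ∀ j ∈ S, θ j ≤ 1) :
    1 - ∑ j ∈ S, θ j ≤ ∏ j ∈ S, (1 - θ j) := by
  classical
  induction S using Finset.induction with
  | empty => simp
  | @insert a s hx ih =>
    rw [Finset.sum_insert hx, Finset.prod_insert hx]
    have hs0 : 0 ≤ ∑ j ∈ s, θ j :=
      Finset.sum_nonneg fun j hj => h0 j (Finset.mem_insert_of_mem hj)
    have ha0 : 0 ≤ θ a := h0 a (Finset.mem_insert_self a s)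
    have ha1 : θ a ≤ 1 := h1 a (Finset.mem_insert_self a s)
    have ihs := ih (fun j hj => h0 j (Finset.mem_insert_of_mem hj))
      (fun j hj => h1 j (Finset.mem_insert_of_mem hj))
    nlinarith [ihs]

private lemma algebra_step (θ p m c : ℝ) (h : 0 ≤ m * (θ * (p - c))) :
    (1 - θ) * p * m ≤ m * (p - c * θ) := by nlinarith

private noncomputable def natSeqRec (C : (ℕ → ℕ) → ℕ → ℕ) : ℕ → ℕ
  | k => C (fun i => if h : i < k then natSeqRec C i else 0) k
  termination_by k => k
  decreasing_by exact h

private lemma natSeqRec_eq (C : (ℕ → ℕ) → ℕ → ℕ) (k : ℕ) :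
    natSeqRec C k = C (fun i => if h : i < k then natSeqRec C i else 0) k := by
  rw [natSeqRec]

private lemma unif_lemma {E : Type} [PseudoMetricSpace E] {K : Set E} (hK : IsCompact K)
    (f : ℕ → E → ℝ) (r : E → ℝ) (L : ℝ) (hL : 0 ≤ L)
    (hf : ∀ m p q, p ∈ K → q ∈ K → |f m p - f m q| ≤ L * dist p q)
    (hconv : ∀ p ∈ K, Tendsto (fun m => f m p) atTop (nhds (r p)))
    {η : ℝ} (hη : 0 < η) :
    ∀ᶠ m in atTop, ∀ p ∈ K, r p - η ≤ f m p := by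
  classical
  set δ : ℝ := η / (4 * (L + 1)) with hδdef
  have hδ : 0 < δ := by positivity
  obtain ⟨t, htK, htfin, htcov⟩ :=
    totallyBounded_iff_subset.1 hK.totallyBounded {q : E × E | dist q.1 q.2 < δ}
      (Metric.dist_mem_uniformity hδ)
  have hrlip : ∀ p q, p ∈ K → q ∈ K → |r p - r q| ≤ L * dist p q := by
    intro p q hp hq
    have h1 : Tendsto (fun m => |f m p - f m q|) atTop (nhds (|r p - r q|)) :=
      ((hconv p hp).sub (hconv q hq)).abs
    exact le_of_tendsto h1 (Eventually.of_forall fun m => hf m p q hp hq)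
  have hev : ∀ᶠ m in atTop, ∀ q ∈ t, r q - η / 2 ≤ f m q := by
    rw [eventually_all_finite htfin]
    intro q hq
    have := hconv q (htK hq)
    have h2 : ∀ᶠ m in atTop, f m q ∈ Set.Ioi (r q - η / 2) :=
      this (Ioi_mem_nhds (by linarith))
    exact h2.mono fun m hm => le_of_lt hm
  refine hev.mono fun m hm p hp => ?_
  obtain ⟨q, hq, hpq⟩ : ∃ q ∈ t, dist p q < δ := by
    have := htcov hp
    simp only [Set.mem_iUnion, Set.mem_setOf_eq] at this
    obtain ⟨q, hq, hd⟩ := this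
    exact ⟨q, hq, hd⟩
  have h3 : |f m p - f m q| ≤ L * δ :=
    le_trans (hf m p q hp (htK hq)) (by nlinarith [dist_nonneg (x := p) (y := q)])
  have h4 : |r p - r q| ≤ L * δ :=
    le_trans (hrlip p q hp (htK hq)) (by nlinarith [dist_nonneg (x := p) (y := q)])
  have h5 : r q - η / 2 ≤ f m q := hm q hq
  have hLδ : L * δ ≤ η / 4 := by
    have h6 : δ * (4 * (L + 1)) = η := by
      rw [hδdef]; field_simp
    nlinarith
  have ha := abs_le.1 h3
  have hb := abs_le.1 h4
  linarith [ha.1, ha.2, hb.1, hb.2]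

/-- Lemma 2.3(b): a symmetric ℓ₁ type yields a subsequence almost isometrically
equivalent to the unit vector basis of ℓ₁. -/
theorem stmt_10 {X : Type*} [NormedAddCommGroup X] [NormedSpace ℝ X] [CompleteSpace X]
    (x : ℕ → X) (hnorm : ∀ n, ‖x n‖ = 1)
    (htype : ∀ (y : X) (β₁ β₂ : ℝ), |β₁| + |β₂| ≠ 0 →
      ∃ (L : ℕ → ℝ) (l : ℝ),
        (∀ m, Tendsto (fun n => ‖y + β₁ • x m + β₂ • x n‖) atTop (nhds (L m))) ∧
        Tendsto L atTop (nhds l) ∧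
        Tendsto (fun m =>
          ‖(|β₁| / (|β₁| + |β₂|)) • y + β₁ • x m‖ +
          ‖(|β₂| / (|β₁| + |β₂|)) • y + β₂ • x m‖) atTop (nhds l))
    (ε : ℕ → ℝ) (hε : StrictAnti ε) (hε0 : Tendsto ε atTop (nhds 0))
    (hε1 : ∀ i, 0 < ε i ∧ ε i < 1) :
    ∃ n : ℕ → ℕ, StrictMono n ∧
      (∀ i₀ k, i₀ ≤ k → ∀ α : ℕ → ℝ,
        (1 - ε i₀) * ∑ i ∈ Finset.Icc i₀ k, |α i| ≤
          ‖∑ i ∈ Finset.Icc i₀ k, α i • x (n i)‖) ∧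
      ∃ A B : ℝ, 0 < A ∧ 0 < B ∧ ∀ (k : ℕ) (α : ℕ → ℝ),
        A * ∑ i ∈ Finset.range k, |α i| ≤ ‖∑ i ∈ Finset.range k, α i • x (n i)‖ ∧
        ‖∑ i ∈ Finset.range k, α i • x (n i)‖ ≤ B * ∑ i ∈ Finset.range k, |α i| := by
  classical
  -- the type function τ
  have hex : ∀ (y : X) (β : ℝ), ∃ t, Tendsto (fun n => ‖y + β • x n‖) atTop (nhds t) := by
    intro y β
    rcases eq_or_ne β 0 with hb | hb
    · exact ⟨‖y‖, by simp only [hb, zero_smul, add_zero]; exact tendsto_const_nhds⟩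
    · obtain ⟨L, l, hL, -, -⟩ := htype y 0 β (by simp [abs_ne_zero.2 hb])
      refine ⟨L 0, ?_⟩
      simpa only [zero_smul, add_zero] using hL 0
  choose τ hτ using hex
  have τ_zero : ∀ y, τ y 0 = ‖y‖ := by
    intro y
    refine tendsto_nhds_unique (hτ y 0) ?_
    simp only [zero_smul, add_zero]
    exact tendsto_const_nhds
  have τ_zero' : ∀ β, τ (0 : X) β = |β| := by
    intro β
    refine tendsto_nhds_unique (hτ 0 β) ?_
    have : (fun n => ‖(0 : X) + β • x n‖) = fun _ => |β| := by
      funext n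
      simp [norm_smul, hnorm n]
    rw [this]
    exact tendsto_const_nhds
  have τ_le : ∀ (y y' : X) (β β' : ℝ), τ y β ≤ τ y' β' + (‖y - y'‖ + |β - β'|) := by
    intro y y' β β'
    refine le_of_tendsto_of_tendsto' (hτ y β) ((hτ y' β').add tendsto_const_nhds)
      (fun n => ?_)
    have h1 : y + β • x n = (y' + β' • x n) + ((y - y') + (β - β') • x n) := by
      rw [sub_smul]; abel
    rw [h1]
    refine le_trans (norm_add_le _ _) ?_
    have h2 : ‖(y - y') + (β - β') • x n‖ ≤ ‖y - y'‖ + |β - β'| := by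
      refine le_trans (norm_add_le _ _) ?_
      rw [norm_smul, hnorm n, Real.norm_eq_abs, mul_one]
    linarith
  have τ_smul : ∀ (c : ℝ), 0 ≤ c → ∀ (y : X) (β : ℝ), τ (c • y) (c * β) = c * τ y β := by
    intro c hc y β
    refine tendsto_nhds_unique (hτ _ _) ?_
    have h1 : (fun n => ‖c • y + (c * β) • x n‖) = fun n => c * ‖y + β • x n‖ := by
      funext n
      rw [mul_smul, ← smul_add, norm_smul, Real.norm_eq_abs, abs_of_nonneg hc]
    rw [h1]
    exact (hτ y β).const_mul c
  have claimB : ∀ (y : X) (β₁ β₂ : ℝ), |β₁| + |β₂| ≠ 0 →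
      Tendsto (fun m => τ (y + β₁ • x m) β₂) atTop
        (nhds (τ ((|β₁| / (|β₁| + |β₂|)) • y) β₁ + τ ((|β₂| / (|β₁| + |β₂|)) • y) β₂)) := by
    intro y β₁ β₂ h
    obtain ⟨L, l, hL, hLl, hsum⟩ := htype y β₁ β₂ h
    have hLm : ∀ m, L m = τ (y + β₁ • x m) β₂ := fun m =>
      tendsto_nhds_unique (hL m) (hτ (y + β₁ • x m) β₂)
    have hl : l = τ ((|β₁| / (|β₁| + |β₂|)) • y) β₁ + τ ((|β₂| / (|β₁| + |β₂|)) • y) β₂ :=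
      tendsto_nhds_unique hsum ((hτ _ β₁).add (hτ _ β₂))
    rw [← hl]
    have : (fun m => τ (y + β₁ • x m) β₂) = L := funext fun m => (hLm m).symm
    rw [this]
    exact hLl
  have hchoice : ∀ (k : ℕ) (v : ℕ → ℕ), ∃ m : ℕ,
      (∀ i, i < k → v i < m) ∧
      ∀ (a : ℕ → ℝ) (γ β : ℝ), (∑ i ∈ Finset.range k, |a i|) + |γ| + |β| ≤ 1 →
        (if γ = 0 ∧ β = 0 then ‖∑ i ∈ Finset.range k, a i • x (v i)‖ else
          τ ((|γ| / (|γ| + |β|)) • ∑ i ∈ Finset.range k, a i • x (v i)) γ +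
          τ ((|β| / (|γ| + |β|)) • ∑ i ∈ Finset.range k, a i • x (v i)) β)
          - (1 - ε 0) * (ε k - ε (k + 1))
        ≤ τ ((∑ i ∈ Finset.range k, a i • x (v i)) + γ • x m) β := by
    intro k v
    set Y : (Fin k → ℝ) → X := fun c => ∑ i, c i • x (v i) with hYdef
    set F : ℕ → ((Fin k → ℝ) × ℝ × ℝ) → ℝ :=
      fun m p => τ (Y p.1 + p.2.1 • x m) p.2.2 with hFdef
    set r : ((Fin k → ℝ) × ℝ × ℝ) → ℝ := fun p =>
      if p.2.1 = 0 ∧ p.2.2 = 0 then ‖Y p.1‖ else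
        τ ((|p.2.1| / (|p.2.1| + |p.2.2|)) • Y p.1) p.2.1 +
        τ ((|p.2.2| / (|p.2.1| + |p.2.2|)) • Y p.1) p.2.2 with hrdef
    set K : Set ((Fin k → ℝ) × ℝ × ℝ) :=
      {p | (∑ i, |p.1 i|) + |p.2.1| + |p.2.2| ≤ 1} with hKdef
    have hKcl : IsClosed K := by
      have hc : Continuous fun p : (Fin k → ℝ) × ℝ × ℝ =>
          (∑ i, |p.1 i|) + |p.2.1| + |p.2.2| := by fun_prop
      exact isClosed_le hc continuous_const
    have hKsub : K ⊆ Metric.closedBall 0 1 := by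
      intro p hp
      simp only [hKdef, Set.mem_setOf_eq] at hp
      have h01 : 0 ≤ |p.2.1| := abs_nonneg _
      have h02 : 0 ≤ |p.2.2| := abs_nonneg _
      have hs0 : 0 ≤ ∑ i, |p.1 i| := Finset.sum_nonneg fun i _ => abs_nonneg _
      rw [Metric.mem_closedBall, dist_zero_right, Prod.norm_def, Prod.norm_def]
      refine max_le ?_ (max_le ?_ ?_)
      · refine pi_norm_le_iff_of_nonneg (by norm_num) |>.2 fun i => ?_
        have := Finset.single_le_sum (f := fun i => |p.1 i|)
          (fun i _ => abs_nonneg _) (Finset.mem_univ i)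
        rw [Real.norm_eq_abs]; linarith
      · rw [Real.norm_eq_abs]; linarith
      · rw [Real.norm_eq_abs]; linarith
    have hKc : IsCompact K :=
      (isCompact_closedBall (0 : (Fin k → ℝ) × ℝ × ℝ) 1).of_isClosed_subset hKcl hKsub
    have hYlip : ∀ c c' : Fin k → ℝ, ‖Y c - Y c'‖ ≤ ∑ i, |c i - c' i| := by
      intro c c'
      rw [hYdef]
      simp only
      rw [← Finset.sum_sub_distrib]
      refine le_trans (norm_sum_le _ _) (Finset.sum_le_sum fun i _ => ?_)
      rw [← sub_smul, norm_smul, Real.norm_eq_abs, hnorm, mul_one]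
    have hkey : ∀ (m : ℕ) (p q : (Fin k → ℝ) × ℝ × ℝ),
        F m p ≤ F m q + (k + 2 : ℝ) * dist p q := by
      intro m p q
      have hd1 : ∀ i, |p.1 i - q.1 i| ≤ dist p q := by
        intro i
        have h1 : dist (p.1 i) (q.1 i) ≤ dist p.1 q.1 := dist_le_pi_dist p.1 q.1 i
        have h2 : dist p.1 q.1 ≤ dist p q := by
          rw [Prod.dist_eq]; exact le_max_left _ _
        rw [← Real.dist_eq]; linarith
      have hd2 : |p.2.1 - q.2.1| ≤ dist p q := by
        have h1 : dist p.2.1 q.2.1 ≤ dist p.2 q.2 := by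
          rw [Prod.dist_eq]; exact le_max_left _ _
        have h2 : dist p.2 q.2 ≤ dist p q := by
          rw [Prod.dist_eq]; exact le_max_right _ _
        rw [← Real.dist_eq]; linarith
      have hd3 : |p.2.2 - q.2.2| ≤ dist p q := by
        have h1 : dist p.2.2 q.2.2 ≤ dist p.2 q.2 := by
          rw [Prod.dist_eq]; exact le_max_right _ _
        have h2 : dist p.2 q.2 ≤ dist p q := by
          rw [Prod.dist_eq]; exact le_max_right _ _
        rw [← Real.dist_eq]; linarith
      have hsum : ∑ i, |p.1 i - q.1 i| ≤ (k : ℝ) * dist p q := by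
        calc ∑ i, |p.1 i - q.1 i| ≤ ∑ _i : Fin k, dist p q :=
              Finset.sum_le_sum fun i _ => hd1 i
          _ = (k : ℝ) * dist p q := by
              rw [Finset.sum_const, Finset.card_univ, Fintype.card_fin, nsmul_eq_mul]
      have h1 := τ_le (Y p.1 + p.2.1 • x m) (Y q.1 + q.2.1 • x m) p.2.2 q.2.2
      have h2 : ‖(Y p.1 + p.2.1 • x m) - (Y q.1 + q.2.1 • x m)‖ ≤
          ∑ i, |p.1 i - q.1 i| + |p.2.1 - q.2.1| := by
        have h3 : (Y p.1 + p.2.1 • x m) - (Y q.1 + q.2.1 • x m) =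
            (Y p.1 - Y q.1) + (p.2.1 - q.2.1) • x m := by
          rw [sub_smul]; abel
        rw [h3]
        refine le_trans (norm_add_le _ _) ?_
        have := hYlip p.1 q.1
        rw [norm_smul, Real.norm_eq_abs, hnorm, mul_one]
        linarith
      simp only [hFdef]
      linarith
    have hflip : ∀ (m : ℕ) (p q : (Fin k → ℝ) × ℝ × ℝ), p ∈ K → q ∈ K →
        |F m p - F m q| ≤ (k + 2 : ℝ) * dist p q := by
      intro m p q _ _
      rw [abs_sub_le_iff]
      constructor
      · linarith [hkey m p q]
      · have := hkey m q p
        rw [dist_comm q p] at this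
        linarith
    have hconv : ∀ p : (Fin k → ℝ) × ℝ × ℝ,
        Tendsto (fun m => F m p) atTop (nhds (r p)) := by
      intro p
      by_cases hd : p.2.1 = 0 ∧ p.2.2 = 0
      · have hfun : (fun m => F m p) = fun _ => ‖Y p.1‖ := by
          funext m
          simp only [hFdef, hd.1, hd.2, zero_smul, add_zero, τ_zero]
        rw [hfun, hrdef]
        simp only [if_pos hd]
        exact tendsto_const_nhds
      · have hne : |p.2.1| + |p.2.2| ≠ 0 := by
          rcases not_and_or.1 hd with h | h
          · have := abs_pos.2 h
            have := abs_nonneg p.2.2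
            linarith
          · have := abs_pos.2 h
            have := abs_nonneg p.2.1
            linarith
        have := claimB (Y p.1) p.2.1 p.2.2 hne
        simp only [hrdef, if_neg hd]
        exact this
    have hη : (0 : ℝ) < (1 - ε 0) * (ε k - ε (k + 1)) :=
      mul_pos (by linarith [(hε1 0).2]) (sub_pos.2 (hε (Nat.lt_succ_self k)))
    have hunif := unif_lemma hKc F r (k + 2 : ℝ) (by positivity) hflip
      (fun p _ => hconv p) hη
    have hbig : ∀ᶠ m in atTop, ∀ i, i < k → v i < m := by
      refine (eventually_gt_atTop ((Finset.range k).sup v)).mono fun m hm i hi => ?_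
      exact lt_of_le_of_lt (Finset.le_sup (Finset.mem_range.2 hi)) hm
    obtain ⟨m, hm1, hm2⟩ := (hbig.and hunif).exists
    refine ⟨m, hm1, ?_⟩
    intro a γ β hmass
    set p : (Fin k → ℝ) × ℝ × ℝ := (fun i => a i, γ, β) with hpdef
    have hsum1 : (∑ i, |p.1 i|) = ∑ i ∈ Finset.range k, |a i| := by
      rw [hpdef]
      exact (Fin.sum_univ_eq_sum_range (fun i => |a i|) k)
    have hsum2 : Y p.1 = ∑ i ∈ Finset.range k, a i • x (v i) := by
      rw [hYdef, hpdef]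
      exact (Fin.sum_univ_eq_sum_range (fun i => a i • x (v i)) k)
    have hpK : p ∈ K := by
      simp only [hKdef, Set.mem_setOf_eq, hsum1]
      exact hmass
    have := hm2 p hpK
    simp only [hFdef, hrdef, hsum2] at this
    exact this
  -- construct the subsequence
  set n : ℕ → ℕ := natSeqRec (fun v k => (hchoice k v).choose) with hndef
  have hCond : ∀ k : ℕ,
      (∀ i, i < k → n i < n k) ∧
      ∀ (a : ℕ → ℝ) (γ β : ℝ), (∑ i ∈ Finset.range k, |a i|) + |γ| + |β| ≤ 1 →
        (if γ = 0 ∧ β = 0 then ‖∑ i ∈ Finset.range k, a i • x (n i)‖ else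
          τ ((|γ| / (|γ| + |β|)) • ∑ i ∈ Finset.range k, a i • x (n i)) γ +
          τ ((|β| / (|γ| + |β|)) • ∑ i ∈ Finset.range k, a i • x (n i)) β)
          - (1 - ε 0) * (ε k - ε (k + 1))
        ≤ τ ((∑ i ∈ Finset.range k, a i • x (n i)) + γ • x (n k)) β := by
    intro k
    set v : ℕ → ℕ := fun i =>
      if h : i < k then natSeqRec (fun v k => (hchoice k v).choose) i else 0 with hvdef
    have hnk : n k = (hchoice k v).choose := by
      rw [hndef, natSeqRec_eq]
    have hvn : ∀ i, i < k → v i = n i := by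
      intro i hi
      rw [hvdef, hndef]
      simp only [dif_pos hi]
    obtain ⟨h1, h2⟩ := (hchoice k v).choose_spec
    constructor
    · intro i hi
      have := h1 i hi
      rw [hvn i hi] at this
      rwa [← hnk] at this
    · intro a γ β hm
      have hYeq : (∑ i ∈ Finset.range k, a i • x (v i))
          = ∑ i ∈ Finset.range k, a i • x (n i) :=
        Finset.sum_congr rfl fun i hi => by rw [hvn i (Finset.mem_range.1 hi)]
      have := h2 a γ β hm
      rw [hYeq, ← hnk] at this
      exact this
  have hmono : StrictMono n :=
    strictMono_nat_of_lt_succ fun k => (hCond (k + 1)).1 k (Nat.lt_succ_self k)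
  clear_value n
  -- basic facts about ε
  have hfact0 : ∀ j, 0 ≤ ε j - ε (j + 1) := fun j => le_of_lt (sub_pos.2 (hε (Nat.lt_succ_self j)))
  have hfact1 : ∀ j, ε j - ε (j + 1) ≤ 1 := fun j => by
    have := (hε1 (j + 1)).1
    have := (hε1 j).2
    linarith
  have hsumθ : ∀ k, ∑ j ∈ Finset.range k, (ε j - ε (j + 1)) = ε 0 - ε k := by
    intro k
    induction k with
    | zero => simp
    | succ k ih => rw [Finset.sum_range_succ, ih]; ring
  have hP'ge : ∀ (k : ℕ) (S : Finset ℕ), S ⊆ Finset.range k →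
      1 - ε 0 ≤ ∏ j ∈ S, (1 - (ε j - ε (j + 1))) := by
    intro k S hS
    refine le_trans ?_ (prod_one_sub_ge _ S (fun j _ => hfact0 j) (fun j _ => hfact1 j))
    have h1 : ∑ j ∈ S, (ε j - ε (j + 1)) ≤ ∑ j ∈ Finset.range k, (ε j - ε (j + 1)) :=
      Finset.sum_le_sum_of_subset_of_nonneg hS fun j _ _ => hfact0 j
    have h2 := hsumθ k
    have := (hε1 k).1
    linarith
  -- the key invariant
  have Q : ∀ (k : ℕ) (a : ℕ → ℝ) (β : ℝ),
      (∏ j ∈ (Finset.range k).filter (fun j => a j ≠ 0), (1 - (ε j - ε (j + 1)))) *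
        ((∑ i ∈ Finset.range k, |a i|) + |β|)
      ≤ τ (∑ i ∈ Finset.range k, a i • x (n i)) β := by
    intro k
    induction k with
    | zero =>
      intro a β
      simp only [Finset.range_zero, Finset.filter_empty, Finset.prod_empty,
        Finset.sum_empty, one_mul, zero_add]
      rw [τ_zero']
    | succ k IH =>
      intro a β
      by_cases hak : a k = 0
      · have hfil : (Finset.range (k + 1)).filter (fun j => a j ≠ 0) =
            (Finset.range k).filter (fun j => a j ≠ 0) := by
          rw [Finset.range_add_one, Finset.filter_insert, if_neg (not_not.2 hak)]
        simp only [Finset.sum_range_succ, hak, hfil, abs_zero, add_zero, zero_smul]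
        exact IH a β
      · -- main case
        simp only [Finset.sum_range_succ]
        set s := ∑ i ∈ Finset.range k, |a i| with hsdef
        set Ya := ∑ i ∈ Finset.range k, a i • x (n i) with hYadef
        set t := |a k| + |β| with htdef
        set M := s + |a k| + |β| with hMdef
        set P' := ∏ j ∈ (Finset.range k).filter (fun j => a j ≠ 0),
          (1 - (ε j - ε (j + 1))) with hP'def
        have hak' : 0 < |a k| := abs_pos.2 hak
        have hs0 : 0 ≤ s := Finset.sum_nonneg fun i _ => abs_nonneg _
        have hβ0 : 0 ≤ |β| := abs_nonneg _
        have ht0 : 0 < t := by rw [htdef]; linarith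
        have hM0 : 0 < M := by rw [hMdef]; linarith
        have htne : t ≠ 0 := ne_of_gt ht0
        have hMne : M ≠ 0 := ne_of_gt hM0
        clear_value s Ya t M P'
        have hmass : (∑ i ∈ Finset.range k, |a i / M|) + |a k / M| + |β / M| ≤ 1 := by
          have h1 : ∀ c : ℝ, |c / M| = |c| / M := fun c => by
            rw [abs_div, abs_of_pos hM0]
          have h2 : (∑ i ∈ Finset.range k, |a i / M|) = s / M := by
            rw [hsdef, Finset.sum_div]
            exact Finset.sum_congr rfl fun i _ => h1 (a i)
          rw [h2, h1, h1, ← add_div, ← add_div, ← hMdef, div_self hMne]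
        have hcond := (hCond k).2 (fun i => a i / M) (a k / M) (β / M) hmass
        have hne1 : a k / M ≠ 0 := div_ne_zero hak hMne
        rw [if_neg (fun h => hne1 h.1)] at hcond
        have eY : (∑ i ∈ Finset.range k, (a i / M) • x (n i)) = M⁻¹ • Ya := by
          rw [hYadef, Finset.smul_sum]
          refine Finset.sum_congr rfl fun i _ => ?_
          rw [smul_smul, div_eq_mul_inv, mul_comm]
        rw [eY] at hcond
        have hrat1 : |a k / M| / (|a k / M| + |β / M|) = |a k| / t := by
          rw [abs_div, abs_div, abs_of_pos hM0, ← add_div, ← htdef]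
          rw [div_div_div_cancel_right₀ hMne]
        have hrat2 : |β / M| / (|a k / M| + |β / M|) = |β| / t := by
          rw [abs_div, abs_div, abs_of_pos hM0, ← add_div, ← htdef]
          rw [div_div_div_cancel_right₀ hMne]
        rw [hrat1, hrat2] at hcond
        have eZ : M⁻¹ • Ya + (a k / M) • x (n k) = M⁻¹ • (Ya + a k • x (n k)) := by
          rw [smul_add]
          congr 1
          rw [smul_smul, div_eq_mul_inv, mul_comm]
        have eβ : β / M = M⁻¹ * β := by rw [div_eq_mul_inv, mul_comm]
        rw [eZ, eβ, τ_smul M⁻¹ (inv_nonneg.2 hM0.le)] at hcond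
        -- lower bound for the two τ-terms
        have hc1 : (0:ℝ) ≤ |a k| / t * M⁻¹ := by positivity
        have hc2 : (0:ℝ) ≤ |β| / t * M⁻¹ := by positivity
        have hg1 : a k / M = (|a k| / t * M⁻¹) * (a k / |a k| * t) := by
          field_simp
        have habs_g1 : |a k / |a k| * t| = t := by
          rw [abs_mul, abs_div, abs_abs, div_self (ne_of_gt hak'), one_mul, abs_of_pos ht0]
        have hIH1 := IH a (a k / |a k| * t)
        rw [habs_g1, ← hP'def, ← hsdef, ← hYadef] at hIH1
        have ht1 : τ ((|a k| / t) • (M⁻¹ • Ya)) (a k / M) =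
            (|a k| / t * M⁻¹) * τ Ya (a k / |a k| * t) := by
          rw [smul_smul, hg1, τ_smul _ hc1]
        have hterm1 : P' / M * (|a k| / t * s + |a k|) ≤
            τ ((|a k| / t) • (M⁻¹ • Ya)) (a k / M) := by
          rw [ht1]
          refine le_trans (le_of_eq ?_) (mul_le_mul_of_nonneg_left hIH1 hc1)
          field_simp
        have hterm2' : P' / M * (|β| / t * s + |β|) ≤
            τ ((|β| / t) • (M⁻¹ • Ya)) (β / M) := by
          by_cases hβ : β = 0
          · simp only [hβ, abs_zero, zero_div, zero_smul, zero_mul, add_zero, mul_zero]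
            rw [τ_zero']
            simp
          · have hβ' : 0 < |β| := abs_pos.2 hβ
            have hg2 : β / M = (|β| / t * M⁻¹) * (β / |β| * t) := by
              field_simp
            have habs_g2 : |β / |β| * t| = t := by
              rw [abs_mul, abs_div, abs_abs, div_self (ne_of_gt hβ'), one_mul, abs_of_pos ht0]
            have hIH2 := IH a (β / |β| * t)
            rw [habs_g2, ← hP'def, ← hsdef, ← hYadef] at hIH2
            have ht2 : τ ((|β| / t) • (M⁻¹ • Ya)) (β / M) =
                (|β| / t * M⁻¹) * τ Ya (β / |β| * t) := by
              rw [smul_smul, hg2, τ_smul _ hc2]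
            rw [ht2]
            refine le_trans (le_of_eq ?_) (mul_le_mul_of_nonneg_left hIH2 hc2)
            field_simp
        have hterm2 : P' / M * (|β| / t * s + |β|) ≤
            τ ((|β| / t) • (M⁻¹ • Ya)) (M⁻¹ * β) := by rw [← eβ]; exact hterm2'
        have hP'bound : 1 - ε 0 ≤ P' := by
          rw [hP'def]
          exact hP'ge k _ (Finset.filter_subset _ _)
        have hLHS : P' ≤ τ ((|a k| / t) • (M⁻¹ • Ya)) (a k / M) +
            τ ((|β| / t) • (M⁻¹ • Ya)) (M⁻¹ * β) := by
          refine le_trans (le_of_eq ?_) (add_le_add hterm1 hterm2)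
          rw [hMdef, htdef]
          field_simp
          ring
        have hfinal : P' - (1 - ε 0) * (ε k - ε (k + 1)) ≤
            M⁻¹ * τ (Ya + a k • x (n k)) β := by linarith
        -- conclude
        have hPnew : (∏ j ∈ (Finset.range (k + 1)).filter (fun j => a j ≠ 0),
            (1 - (ε j - ε (j + 1)))) = (1 - (ε k - ε (k + 1))) * P' := by
          rw [Finset.range_add_one, Finset.filter_insert, if_pos hak,
            Finset.prod_insert (by simp), hP'def]
        rw [hPnew]
        have hθk0 := hfact0 k
        have h9 : M * (P' - (1 - ε 0) * (ε k - ε (k + 1))) ≤ τ (Ya + a k • x (n k)) β := by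
          have h9' := mul_le_mul_of_nonneg_left hfinal hM0.le
          calc M * (P' - (1 - ε 0) * (ε k - ε (k + 1)))
              ≤ M * (M⁻¹ * τ (Ya + a k • x (n k)) β) := h9'
            _ = τ (Ya + a k • x (n k)) β := by
                rw [← mul_assoc, mul_inv_cancel₀ hMne, one_mul]
        refine le_trans ?_ h9
        exact algebra_step _ _ _ _
          (mul_nonneg hM0.le (mul_nonneg hθk0 (by linarith)))
  have hIccθ : ∀ i₀ k, i₀ ≤ k →
      ∑ j ∈ Finset.Icc i₀ k, (ε j - ε (j + 1)) = ε i₀ - ε (k + 1) := by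
    intro i₀ k h
    induction k, h using Nat.le_induction with
    | base => simp
    | succ k hk ih =>
      rw [Finset.sum_Icc_succ_top (le_trans hk (Nat.le_succ k)), ih]
      ring
  have hpart1 : ∀ i₀ k, i₀ ≤ k → ∀ α : ℕ → ℝ,
      (1 - ε i₀) * ∑ i ∈ Finset.Icc i₀ k, |α i| ≤
        ‖∑ i ∈ Finset.Icc i₀ k, α i • x (n i)‖ := by
    intro i₀ k hik α
    set a : ℕ → ℝ := fun i => if i ∈ Finset.Icc i₀ k then α i else 0 with hadef
    have hIcc_sub : Finset.Icc i₀ k ⊆ Finset.range (k + 1) := fun j hj =>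
      Finset.mem_range.2 (Nat.lt_succ_of_le (Finset.mem_Icc.1 hj).2)
    have h1 : ∑ i ∈ Finset.range (k + 1), a i • x (n i)
        = ∑ i ∈ Finset.Icc i₀ k, α i • x (n i) := by
      rw [← Finset.sum_subset hIcc_sub
        (fun j _ hnj => by simp only [hadef]; rw [if_neg hnj, zero_smul])]
      exact Finset.sum_congr rfl fun i hi => by simp only [hadef]; rw [if_pos hi]
    have h2 : ∑ i ∈ Finset.range (k + 1), |a i| = ∑ i ∈ Finset.Icc i₀ k, |α i| := by
      rw [← Finset.sum_subset hIcc_sub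
        (fun j _ hnj => by simp only [hadef]; rw [if_neg hnj, abs_zero])]
      exact Finset.sum_congr rfl fun i hi => by simp only [hadef]; rw [if_pos hi]
    have hQ := Q (k + 1) a 0
    rw [τ_zero, abs_zero, add_zero, h1, h2] at hQ
    refine le_trans ?_ hQ
    have hSsub : (Finset.range (k + 1)).filter (fun j => a j ≠ 0) ⊆ Finset.Icc i₀ k := by
      intro j hj
      have hne := (Finset.mem_filter.1 hj).2
      by_contra hc
      exact hne (by simp only [hadef]; rw [if_neg hc])
    have hprod : 1 - ε i₀ ≤ ∏ j ∈ (Finset.range (k + 1)).filter (fun j => a j ≠ 0),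
        (1 - (ε j - ε (j + 1))) := by
      refine le_trans ?_ (prod_one_sub_ge _ _ (fun j _ => hfact0 j) (fun j _ => hfact1 j))
      have hs1 : ∑ j ∈ (Finset.range (k + 1)).filter (fun j => a j ≠ 0), (ε j - ε (j + 1))
          ≤ ∑ j ∈ Finset.Icc i₀ k, (ε j - ε (j + 1)) :=
        Finset.sum_le_sum_of_subset_of_nonneg hSsub fun j _ _ => hfact0 j
      have hs2 := hIccθ i₀ k hik
      have := (hε1 (k + 1)).1
      linarith
    exact mul_le_mul_of_nonneg_right hprod (Finset.sum_nonneg fun i _ => abs_nonneg _)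
  refine ⟨n, hmono, hpart1, 1 - ε 0, 1, by linarith [(hε1 0).2], one_pos, ?_⟩
  intro k α
  constructor
  · rcases Nat.eq_zero_or_pos k with hk | hk
    · simp [hk]
    · obtain ⟨k', rfl⟩ := Nat.exists_eq_succ_of_ne_zero hk.ne'
      have hIcc : Finset.Icc 0 k' = Finset.range (k' + 1) := by
        ext j; simp [Nat.lt_succ_iff]
      have := hpart1 0 k' (Nat.zero_le k') α
      rwa [hIcc] at this
  · have h1 : ‖∑ i ∈ Finset.range k, α i • x (n i)‖ ≤ ∑ i ∈ Finset.range k, |α i| := by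
      refine le_trans (norm_sum_le _ _) (le_of_eq ?_)
      exact Finset.sum_congr rfl fun i _ => by
        rw [norm_smul, Real.norm_eq_abs, hnorm, mul_one]
    rw [one_mul]
    exact h1
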